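/- arXiv:2305.16794 — 2 statements merged into one kernel-verified Lean document; each statement's English description precedes it below -/
import Mathlib

section
/- Let U be a finite set of clients with |U| ≥ 2, let R ≥ 2 and m be natural numbers, and for each u ∈ U let h_u be a fixed element of the additive group (ZMod R)^m of m-tuples of integers modulo R. Fix a linear order on U and, for each pair u < v, let p_{u,v} be independent random variables each uniformly distributed on (ZMod R)^m; define pairwise masks n_{u,v} = p_{u,v} and n_{v,u} = −p_{u,v}, so that n_{u,v} = −n_{v,u} for all u ≠ v. Then the random tuple (h_u + ∑_{v ∈ U, v ≠ u} n_{u,v})_{u ∈ U} of masked values has exactly the same distribution as a tuple (w_u)_{u ∈ U} drawn uniformly from the set of all tuples in ((ZMod R)^m)^U whose coordinates sum to ∑_{u ∈ U} h_u. In other words, conditioned on the sum, the masked values are jointly uniformly random. -/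
open PMF

open scoped ENNReal

set_option linter.unusedSectionVars false

open Finset

section Aux

variable {U : Type*} [Fintype U] [LinearOrder U] {G : Type*} [AddCommGroup G]

/-- The antisymmetric mask. -/
def maskFn (p : {q : U × U // q.1 < q.2} → G) (u v : U) : G :=
  if huv : u < v then p ⟨(u, v), huv⟩ else if hvu : v < u then - p ⟨(v, u), hvu⟩ else 0

/-- Total mask received by client `u`. -/
def maskSum (p : {q : U × U // q.1 < q.2} → G) (u : U) : G :=
  ∑ v ∈ Finset.univ.erase u, maskFn p u v

lemma maskFn_self (p : {q : U × U // q.1 < q.2} → G) (u : U) : maskFn p u u = 0 := by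
  simp [maskFn]

lemma maskFn_antisym (p : {q : U × U // q.1 < q.2} → G) (u v : U) :
    maskFn p u v + maskFn p v u = 0 := by
  unfold maskFn
  rcases lt_trichotomy u v with h | h | h
  · simp [h, not_lt.mpr h.le, lt_asymm h]
  · simp [h]
  · simp [h, not_lt.mpr h.le, lt_asymm h]

lemma maskFn_sub (p q : {q : U × U // q.1 < q.2} → G) (u v : U) :
    maskFn (p - q) u v = maskFn p u v - maskFn q u v := by
  unfold maskFn
  split_ifs <;> simp [neg_sub, sub_eq_add_neg, neg_add, add_comm]

lemma maskSum_sub (p q : {q : U × U // q.1 < q.2} → G) (u : U) :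
    maskSum (p - q) u = maskSum p u - maskSum q u := by
  simp [maskSum, maskFn_sub, Finset.sum_sub_distrib]

lemma sum_maskSum (p : {q : U × U // q.1 < q.2} → G) :
    ∑ u, maskSum p u = 0 := by
  classical
  have h1 : ∀ u : U, maskSum p u = ∑ v, maskFn p u v := by
    intro u
    rw [maskSum, Finset.sum_erase Finset.univ (maskFn_self p u)]
  calc ∑ u, maskSum p u = ∑ x ∈ Finset.univ ×ˢ Finset.univ, maskFn p x.1 x.2 := by
        rw [Finset.sum_product]; simp [h1]
    _ = 0 := by
        refine Finset.sum_involution (fun x _ => x.swap) (fun x _ => maskFn_antisym p x.1 x.2)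
          (fun x _ hx => ?_) (fun x _ => Finset.mem_product.mpr ⟨Finset.mem_univ _, Finset.mem_univ _⟩)
          (fun x _ => Prod.swap_swap x)
        intro hxx
        apply hx
        have : x.1 = x.2 := by
          have := congrArg Prod.fst hxx
          simpa using this.symm
        simp [maskFn, this]

end Aux

section Aux2
variable {U : Type*} [Fintype U] [LinearOrder U] {G : Type*} [AddCommGroup G]

lemma maskFn_add (p q : {q : U × U // q.1 < q.2} → G) (u v : U) :
    maskFn (p + q) u v = maskFn p u v + maskFn q u v := by
  unfold maskFn
  split_ifs <;> simp [neg_add, add_comm]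

lemma maskSum_add (p q : {q : U × U // q.1 < q.2} → G) (u : U) :
    maskSum (p + q) u = maskSum p u + maskSum q u := by
  simp [maskSum, maskFn_add, Finset.sum_add_distrib]

lemma maskSum_zero (u : U) : maskSum (0 : {q : U × U // q.1 < q.2} → G) u = 0 := by
  have := maskSum_sub (0 : {q : U × U // q.1 < q.2} → G) 0 u
  simpa using this

lemma maskSum_surj (hU : 2 ≤ Fintype.card U) (g : U → G) (hg : ∑ u, g u = 0) :
    ∃ p : {q : U × U // q.1 < q.2} → G, ∀ u, maskSum p u = g u := by
  classical
  have hpos : 0 < Fintype.card U := by omega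
  have hne : Nonempty U := Fintype.card_pos_iff.mp hpos
  let u₀ := (Finset.univ : Finset U).min' Finset.univ_nonempty
  have hmin : ∀ u : U, u ≠ u₀ → u₀ < u := fun u hu =>
    lt_of_le_of_ne (Finset.min'_le _ _ (Finset.mem_univ u)) (Ne.symm hu)
  refine ⟨fun q => if q.1.1 = u₀ then - g q.1.2 else 0, ?_⟩
  intro u
  by_cases hu : u = u₀
  · subst hu
    have hcongr : ∀ v ∈ Finset.univ.erase u₀, maskFn (fun q : {q : U × U // q.1 < q.2} =>
        if q.1.1 = u₀ then - g q.1.2 else 0) u₀ v = - g v := by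
      intro v hv
      have hv' : u₀ < v := hmin v (Finset.ne_of_mem_erase hv)
      simp [maskFn, hv']
    rw [maskSum, Finset.sum_congr rfl hcongr, Finset.sum_neg_distrib,
      Finset.sum_erase_eq_sub (Finset.mem_univ u₀), hg]
    simp
  · have hu' : u₀ < u := hmin u hu
    have hcongr : ∀ v ∈ Finset.univ.erase u, maskFn (fun q : {q : U × U // q.1 < q.2} =>
        if q.1.1 = u₀ then - g q.1.2 else 0) u v = if v = u₀ then g u else 0 := by
      intro v hv
      rcases lt_trichotomy u v with hlt | heq | hgt
      · have hvne : v ≠ u₀ := fun e => absurd (e ▸ hlt) (not_lt.mpr hu'.le)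
        simp [maskFn, hlt, hu, hvne]
      · exact absurd heq.symm (Finset.ne_of_mem_erase hv)
      · by_cases hv0 : v = u₀ <;>
          simp [maskFn, hgt, not_lt.mpr hgt.le, hv0, hu', not_lt.mpr hu'.le]
    rw [maskSum, Finset.sum_congr rfl hcongr, Finset.sum_ite_eq' _ u₀ (fun _ => g u)]
    simp [Finset.mem_erase, hu'.ne]

end Aux2


/-- vFedSec masking lemma: let `U` be a finite linearly ordered set of clients with
`|U| ≥ 2`, let `R ≥ 2`, and let `h u ∈ (ZMod R)^m` be the fixed private value of each
client `u`. For each pair `u < v` let `p ⟨(u, v), _⟩` be independent uniform random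
elements of `(ZMod R)^m` (jointly, `p` is uniform on the finite product space), and
define the antisymmetric pairwise masks `n (u, v) = p ⟨(u, v), _⟩` if `u < v`,
`n (u, v) = - p ⟨(v, u), _⟩` if `v < u`. Then the random tuple of masked values
`(h u + ∑ v ≠ u, n (u, v))_{u ∈ U}` is uniformly distributed on the set of all tuples
`w : U → (ZMod R)^m` with `∑ u, w u = ∑ u, h u`. -/
theorem masked_values_uniform_given_sum {U : Type*} [Fintype U] [LinearOrder U]
    (hU : 2 ≤ Fintype.card U) (R m : ℕ) [NeZero R] (hR : 2 ≤ R)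
    (h : U → (Fin m → ZMod R)) :
    PMF.map
        (fun p : {q : U × U // q.1 < q.2} → (Fin m → ZMod R) =>
          fun u : U => h u + ∑ v ∈ Finset.univ.erase u,
            (if huv : u < v then p ⟨(u, v), huv⟩
             else if hvu : v < u then - p ⟨(v, u), hvu⟩ else 0))
        (PMF.uniformOfFintype ({q : U × U // q.1 < q.2} → (Fin m → ZMod R)))
      = PMF.uniformOfFinset
          (Finset.univ.filter
            (fun w : U → (Fin m → ZMod R) => ∑ u : U, w u = ∑ u : U, h u))
          ⟨h, Finset.mem_filter.mpr ⟨Finset.mem_univ _, rfl⟩⟩ := by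
  classical
  set f : (({q : U × U // q.1 < q.2} → (Fin m → ZMod R))) → ((U → (Fin m → ZMod R))) := fun p u => h u + maskSum p u with hfdef
  show PMF.map f _ = _
  set S := Finset.univ.filter (fun w : (U → (Fin m → ZMod R)) => ∑ u : U, w u = ∑ u : U, h u) with hS
  set k := (Finset.univ.filter (fun p : ({q : U × U // q.1 < q.2} → (Fin m → ZMod R)) => f p = h)).card with hk
  have sum_f : ∀ p : ({q : U × U // q.1 < q.2} → (Fin m → ZMod R)), ∑ u, f p u = ∑ u, h u := by
    intro p
    simp [hfdef, Finset.sum_add_distrib, sum_maskSum]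
  have fiber_eq : ∀ w : (U → (Fin m → ZMod R)), ∑ u, w u = ∑ u, h u →
      (Finset.univ.filter (fun p : ({q : U × U // q.1 < q.2} → (Fin m → ZMod R)) => f p = w)).card = k := by
    intro w hw
    obtain ⟨p₀, hp₀⟩ := maskSum_surj hU (fun u => w u - h u)
      (by rw [Finset.sum_sub_distrib, hw, sub_self])
    refine Finset.card_bij' (fun p _ => p - p₀) (fun q _ => q + p₀) ?_ ?_ ?_ ?_
    · intro p hp
      rw [Finset.mem_filter] at hp ⊢
      refine ⟨Finset.mem_univ _, ?_⟩
      funext u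
      have hpu := congrFun hp.2 u
      simp only [hfdef] at hpu ⊢
      rw [maskSum_sub, hp₀ u, ← hpu]
      abel
    · intro q hq
      rw [Finset.mem_filter] at hq ⊢
      refine ⟨Finset.mem_univ _, ?_⟩
      funext u
      have hqu := congrFun hq.2 u
      simp only [hfdef] at hqu ⊢
      rw [maskSum_add, hp₀ u]
      have hq0 : maskSum q u = 0 := add_left_cancel (hqu.trans (add_zero (h u)).symm)
      rw [hq0, zero_add]
      abel
    · intro p _; simp
    · intro q _; simp
  have k_pos : 0 < k := by
    rw [hk]
    refine Finset.card_pos.mpr ⟨0, ?_⟩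
    rw [Finset.mem_filter]
    refine ⟨Finset.mem_univ _, ?_⟩
    funext u
    simp [hfdef, maskSum_zero]
  have hS_mem : ∀ w : (U → (Fin m → ZMod R)), w ∈ S ↔ ∑ u, w u = ∑ u, h u := by
    intro w; simp [hS]
  have hS_ne : S.card ≠ 0 := by
    refine (Finset.card_pos.mpr ⟨h, (hS_mem h).mpr rfl⟩).ne'
  have card_total : Fintype.card (({q : U × U // q.1 < q.2} → (Fin m → ZMod R))) = k * S.card := by
    have hcf := Finset.card_eq_sum_card_fiberwise
      (s := (Finset.univ : Finset ({q : U × U // q.1 < q.2} → (Fin m → ZMod R)))) (t := S) (f := f)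
      (fun p _ => (hS_mem (f p)).mpr (sum_f p))
    rw [Finset.card_univ] at hcf
    rw [hcf, Finset.sum_congr rfl (fun w hw => fiber_eq w ((hS_mem w).mp hw)),
      Finset.sum_const, smul_eq_mul, mul_comm]
  ext w
  rw [PMF.map_apply, tsum_fintype]
  erw [PMF.uniformOfFinset_apply]
  simp only [PMF.uniformOfFintype_apply]
  have hfilter : Finset.univ.filter (fun p : ({q : U × U // q.1 < q.2} → (Fin m → ZMod R)) => w = f p)
      = Finset.univ.filter (fun p : ({q : U × U // q.1 < q.2} → (Fin m → ZMod R)) => f p = w) :=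
    Finset.filter_congr (fun p _ => eq_comm)
  have hsum : ∑ p : ({q : U × U // q.1 < q.2} → (Fin m → ZMod R)), (if w = f p then (Fintype.card (({q : U × U // q.1 < q.2} → (Fin m → ZMod R))) : ℝ≥0∞)⁻¹ else 0)
      = ((Finset.univ.filter (fun p : ({q : U × U // q.1 < q.2} → (Fin m → ZMod R)) => f p = w)).card : ℝ≥0∞)
        * (Fintype.card (({q : U × U // q.1 < q.2} → (Fin m → ZMod R))) : ℝ≥0∞)⁻¹ := by
    rw [← Finset.sum_filter, hfilter, Finset.sum_const, nsmul_eq_mul]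
  rw [hsum]
  by_cases hw : ∑ u, w u = ∑ u, h u
  · rw [fiber_eq w hw, if_pos ((hS_mem w).mpr hw), card_total]
    have hk0 : (k : ℝ≥0∞) ≠ 0 := Nat.cast_ne_zero.mpr k_pos.ne'
    push_cast
    rw [ENNReal.mul_inv (Or.inl hk0) (Or.inl (ENNReal.natCast_ne_top _)), ← mul_assoc,
      ENNReal.mul_inv_cancel hk0 (ENNReal.natCast_ne_top _), one_mul]
  · have hempty : Finset.univ.filter (fun p : ({q : U × U // q.1 < q.2} → (Fin m → ZMod R)) => f p = w) = ∅ :=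
      Finset.filter_eq_empty_iff.mpr (fun p _ hfp => hw (hfp ▸ sum_f p))
    rw [hempty, if_neg (fun hmem => hw ((hS_mem w).mp hmem))]
    simp
end

section
/- Let R ≥ 2 and m be natural numbers, and let v₁, v₂ be fixed elements of (ZMod R)^m. Let M be a random variable uniformly distributed on (ZMod R)^m. Then the pair (v₁ + M, v₂ − M) is uniformly distributed on the set {(a, b) ∈ (ZMod R)^m × (ZMod R)^m : a + b = v₁ + v₂}. That is, masking two clients' values with a single shared antisymmetric pairwise mask makes the pair of masked values uniform among all pairs with the correct sum. -/
open PMF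

/-- Two-client masking base case: let `v₁ v₂ : (ZMod R)^m` be fixed values and let `M`
be uniformly distributed on `(ZMod R)^m`. Then the pair `(v₁ + M, v₂ - M)` is uniformly
distributed on the set of pairs `(a, b)` with `a + b = v₁ + v₂`. -/
theorem two_client_mask_uniform (R m : ℕ) [NeZero R] (hR : 2 ≤ R)
    (v₁ v₂ : Fin m → ZMod R) :
    PMF.map (fun M : Fin m → ZMod R => (v₁ + M, v₂ - M))
        (PMF.uniformOfFintype (Fin m → ZMod R))
      = PMF.uniformOfFinset
          (Finset.univ.filter
            (fun p : (Fin m → ZMod R) × (Fin m → ZMod R) => p.1 + p.2 = v₁ + v₂))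
          ⟨(v₁, v₂), Finset.mem_filter.mpr ⟨Finset.mem_univ _, rfl⟩⟩ := by
  set s := Finset.univ.filter
      (fun p : (Fin m → ZMod R) × (Fin m → ZMod R) => p.1 + p.2 = v₁ + v₂) with hs
  have hcard : s.card = Fintype.card (Fin m → ZMod R) := by
    rw [← Finset.card_univ]
    apply Finset.card_bij' (fun q _ => q.1) (fun a _ => (a, v₁ + v₂ - a))
    · intro q hq; exact Finset.mem_univ _
    · intro a _
      simp [hs]
    · intro q hq
      have h : q.1 + q.2 = v₁ + v₂ := (Finset.mem_filter.mp hq).2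
      have : v₁ + v₂ - q.1 = q.2 := by rw [← h]; abel
      simp [this]
    · intro a _; rfl
  ext p
  rw [PMF.map_apply]
  erw [PMF.uniformOfFinset_apply]
  by_cases hp : p ∈ s
  · have hpe : p.1 + p.2 = v₁ + v₂ := (Finset.mem_filter.mp hp).2
    have key : p = (v₁ + (p.1 - v₁), v₂ - (p.1 - v₁)) := by
      have : v₂ - (p.1 - v₁) = p.2 := by linear_combination -hpe
      rw [this]
      simp
    rw [tsum_eq_single (p.1 - v₁)]
    · rw [if_pos key, if_pos hp, PMF.uniformOfFintype_apply, hcard]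
    · intro b hb
      rw [if_neg]
      intro h
      apply hb
      have h1 := congrArg Prod.fst h
      simp only at h1
      rw [h1]; abel
  · rw [if_neg hp]
    refine ENNReal.tsum_eq_zero.mpr fun a => ?_
    rw [if_neg]
    intro h
    apply hp
    rw [hs, h]
    simp only [Finset.mem_filter, Finset.mem_univ, true_and]
    abel
end
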